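/- Let V, W be closed linear subspaces of a Hilbert space H with orthogonal projections π_V, π_W. Then for every x ∈ H, ‖π_V(x) − π_W(x)‖ ≤ d_G(V,W) ‖x‖; conversely d_G(V,W) ≤ sup_{‖x‖=1} ‖π_V(x) − π_W(x)‖. -/

import Mathlib

open Metric

variable {H : Type} [NormedAddCommGroup H] [InnerProductSpace ℝ H] [CompleteSpace H]

private lemma aux_distproj (V W : Submodule ℝ H) [CompleteSpace V] [CompleteSpace W]
    (v : H) (hv : v ∈ V) :
    ‖v - (Submodule.orthogonalProjectionOnto W v : H)‖ ≤
      hausdorffDist ((V : Set H) ∩ closedBall 0 1) ((W : Set H) ∩ closedBall 0 1) * ‖v‖ := by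
  set d := hausdorffDist ((V : Set H) ∩ closedBall 0 1) ((W : Set H) ∩ closedBall 0 1) with hd
  have hWne : ((W : Set H) ∩ closedBall 0 1).Nonempty := ⟨0, W.zero_mem, by simp⟩
  have hVne : ((V : Set H) ∩ closedBall 0 1).Nonempty := ⟨0, V.zero_mem, by simp⟩
  have hfin : EMetric.hausdorffEdist ((V : Set H) ∩ closedBall 0 1)
      ((W : Set H) ∩ closedBall 0 1) ≠ ⊤ := by
    apply hausdorffEdist_ne_top_of_nonempty_of_bounded hVne hWne
    · exact (isBounded_closedBall).subset Set.inter_subset_right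
    · exact (isBounded_closedBall).subset Set.inter_subset_right
  rcases eq_or_ne v 0 with rfl | hv0
  · simp
  · have hnv : 0 < ‖v‖ := norm_pos_iff.mpr hv0
    set u := ‖v‖⁻¹ • v with hu
    have hu1 : ‖u‖ = 1 := by
      rw [hu, norm_smul, norm_inv, norm_norm, inv_mul_cancel₀ hnv.ne']
    have huV : u ∈ (V : Set H) ∩ closedBall 0 1 := by
      refine ⟨V.smul_mem _ hv, ?_⟩
      simp [hu1]
    have h1 : infDist u ((W : Set H) ∩ closedBall 0 1) ≤ d :=
      infDist_le_hausdorffDist_of_mem huV hfin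
    have h2 : ‖u - (Submodule.orthogonalProjectionOnto W u : H)‖ ≤
        infDist u ((W : Set H) ∩ closedBall 0 1) := by
      by_contra hlt
      push_neg at hlt
      obtain ⟨w, hw, hdw⟩ := (infDist_lt_iff hWne).mp hlt
      rw [dist_eq_norm] at hdw
      have hmin : ‖u - (Submodule.orthogonalProjectionOnto W u : H)‖ ≤ ‖u - w‖ := by
        calc ‖u - (Submodule.orthogonalProjectionOnto W u : H)‖ = ⨅ x : W, ‖u - x‖ :=
              Submodule.starProjection_minimal u
          _ ≤ ‖u - (⟨w, hw.1⟩ : W)‖ := ciInf_le ⟨0, fun x ⟨y, hy⟩ => hy ▸ norm_nonneg _⟩ _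
          _ = ‖u - w‖ := rfl
      linarith
    have key : ‖u - (Submodule.orthogonalProjectionOnto W u : H)‖ ≤ d := h2.trans h1
    have hvu : v = ‖v‖ • u := by rw [hu, smul_smul, mul_inv_cancel₀ hnv.ne', one_smul]
    calc ‖v - (Submodule.orthogonalProjectionOnto W v : H)‖
        = ‖(‖v‖ • u) - (Submodule.orthogonalProjectionOnto W (‖v‖ • u) : H)‖ := by rw [← hvu]
      _ = ‖v‖ * ‖u - (Submodule.orthogonalProjectionOnto W u : H)‖ := by
          rw [map_smul]
          push_cast
          rw [← smul_sub, norm_smul, norm_norm]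
      _ ≤ ‖v‖ * d := mul_le_mul_of_nonneg_left key (norm_nonneg _)
      _ = d * ‖v‖ := mul_comm _ _

private lemma aux_orth (V W : Submodule ℝ H) [CompleteSpace V] [CompleteSpace W]
    (y : H) (hy : y ∈ Vᗮ) :
    ‖(Submodule.orthogonalProjectionOnto W y : H)‖ ≤
      hausdorffDist ((V : Set H) ∩ closedBall 0 1) ((W : Set H) ∩ closedBall 0 1) * ‖y‖ := by
  set d := hausdorffDist ((V : Set H) ∩ closedBall 0 1) ((W : Set H) ∩ closedBall 0 1) with hd
  set q : H := (Submodule.orthogonalProjectionOnto W y : H) with hq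
  rcases eq_or_ne q 0 with h0 | h0
  · rw [h0, norm_zero]
    have : (0:ℝ) ≤ d := hausdorffDist_nonneg
    positivity
  have hqpos : 0 < ‖q‖ := norm_pos_iff.mpr h0
  have hinner1 : (inner ℝ q y : ℝ) = ‖q‖ ^ 2 := by
    have h' : (inner ℝ (y - q) q : ℝ) = 0 :=
      Submodule.starProjection_inner_eq_zero (K := W) y q (Submodule.orthogonalProjectionOnto W y).2
    have h2 : (inner ℝ y q : ℝ) - inner ℝ q q = 0 := by rw [← inner_sub_left]; exact h'
    have hyq : (inner ℝ y q : ℝ) = inner ℝ q q := by linarith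
    rw [real_inner_comm y q, hyq, real_inner_self_eq_norm_sq]
  have hPq : ((Submodule.orthogonalProjectionOnto V q : H)) ∈ V := (Submodule.orthogonalProjectionOnto V q).2
  have hinner2 : (inner ℝ q y : ℝ) = inner ℝ (q - (Submodule.orthogonalProjectionOnto V q : H)) y := by
    rw [inner_sub_left]
    have hz : (inner ℝ ((Submodule.orthogonalProjectionOnto V q : H)) y : ℝ) = 0 := hy _ hPq
    rw [hz, sub_zero]
  have hbound : ‖q - (Submodule.orthogonalProjectionOnto V q : H)‖ ≤
      hausdorffDist ((W : Set H) ∩ closedBall 0 1) ((V : Set H) ∩ closedBall 0 1) * ‖q‖ :=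
    aux_distproj W V q (Submodule.orthogonalProjectionOnto W y).2
  have hsymm : hausdorffDist ((W : Set H) ∩ closedBall 0 1)
      ((V : Set H) ∩ closedBall 0 1) = d := by rw [hd, hausdorffDist_comm]
  rw [hsymm] at hbound
  have hmain : ‖q‖ ^ 2 ≤ d * ‖q‖ * ‖y‖ := by
    rw [← hinner1, hinner2]
    calc (inner ℝ (q - (Submodule.orthogonalProjectionOnto V q : H)) y : ℝ)
        ≤ ‖q - (Submodule.orthogonalProjectionOnto V q : H)‖ * ‖y‖ := real_inner_le_norm _ _
      _ ≤ d * ‖q‖ * ‖y‖ := mul_le_mul_of_nonneg_right hbound (norm_nonneg _)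
  nlinarith [hqpos]

/-- In a Hilbert space, the operator distance between two orthogonal projections is
controlled by the Grassmannian distance of the subspaces, and conversely. -/
theorem orthogonalProjection_dist_vs_grassDist {H : Type} [NormedAddCommGroup H]
    [InnerProductSpace ℝ H] [CompleteSpace H]
    (V W : Submodule ℝ H) [CompleteSpace V] [CompleteSpace W] :
    (∀ x : H,
        ‖(V.orthogonalProjectionOnto x : H) - (W.orthogonalProjectionOnto x : H)‖ ≤
          hausdorffDist ((V : Set H) ∩ closedBall 0 1)
            ((W : Set H) ∩ closedBall 0 1) * ‖x‖) ∧
      ∀ M : ℝ, 0 ≤ M →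
        (∀ x : H, ‖x‖ = 1 →
          ‖(V.orthogonalProjectionOnto x : H) - (W.orthogonalProjectionOnto x : H)‖ ≤ M) →
        hausdorffDist ((V : Set H) ∩ closedBall 0 1)
          ((W : Set H) ∩ closedBall 0 1) ≤ M := by
  set d := hausdorffDist ((V : Set H) ∩ closedBall 0 1) ((W : Set H) ∩ closedBall 0 1) with hd
  have hd0 : 0 ≤ d := hausdorffDist_nonneg
  constructor
  · intro x
    set a : H := (Submodule.orthogonalProjectionOnto V x : H) with ha
    set b : H := x - a with hb
    have hbV : b ∈ Vᗮ := Submodule.sub_starProjection_mem_orthogonal (K := V) x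
    have haV : a ∈ V := (Submodule.orthogonalProjectionOnto V x).2
    have hsplit : a - (Submodule.orthogonalProjectionOnto W x : H) =
        (a - (Submodule.orthogonalProjectionOnto W a : H)) - (Submodule.orthogonalProjectionOnto W b : H) := by
      have hx : x = a + b := by rw [hb]; abel
      rw [hx, map_add]
      push_cast
      abel
    have horth : (inner ℝ (a - (Submodule.orthogonalProjectionOnto W a : H))
        ((Submodule.orthogonalProjectionOnto W b : H)) : ℝ) = 0 :=
      Submodule.starProjection_inner_eq_zero (K := W) a _ (Submodule.orthogonalProjectionOnto W b).2
    have hA : ‖a - (Submodule.orthogonalProjectionOnto W a : H)‖ ≤ d * ‖a‖ := aux_distproj V W a haV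
    have hB : ‖(Submodule.orthogonalProjectionOnto W b : H)‖ ≤ d * ‖b‖ := aux_orth V W b hbV
    have hpyth : ‖a - (Submodule.orthogonalProjectionOnto W x : H)‖ ^ 2 =
        ‖a - (Submodule.orthogonalProjectionOnto W a : H)‖ ^ 2 +
          ‖(Submodule.orthogonalProjectionOnto W b : H)‖ ^ 2 := by
      rw [hsplit, sub_eq_add_neg, norm_add_sq_real, inner_neg_right, horth, norm_neg]
      ring
    have hxpyth : ‖a‖ ^ 2 + ‖b‖ ^ 2 = ‖x‖ ^ 2 := by
      have hab : (inner ℝ a b : ℝ) = 0 := hbV a haV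
      have hx : x = a + b := by rw [hb]; abel
      rw [hx, norm_add_sq_real, hab]
      ring
    have hsq : ‖a - (Submodule.orthogonalProjectionOnto W x : H)‖ ^ 2 ≤ (d * ‖x‖) ^ 2 := by
      calc ‖a - (Submodule.orthogonalProjectionOnto W x : H)‖ ^ 2
          = ‖a - (Submodule.orthogonalProjectionOnto W a : H)‖ ^ 2 +
              ‖(Submodule.orthogonalProjectionOnto W b : H)‖ ^ 2 := hpyth
        _ ≤ (d * ‖a‖) ^ 2 + (d * ‖b‖) ^ 2 := by gcongr <;> positivity
        _ = d ^ 2 * (‖a‖ ^ 2 + ‖b‖ ^ 2) := by ring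
        _ = d ^ 2 * ‖x‖ ^ 2 := by rw [hxpyth]
        _ = (d * ‖x‖) ^ 2 := by ring
    exact (abs_le_of_sq_le_sq' hsq (by positivity)).2
  · intro M hM hbound
    have hbound' : ∀ x : H, ‖x‖ = 1 →
        ‖(Submodule.orthogonalProjectionOnto W x : H) - (Submodule.orthogonalProjectionOnto V x : H)‖ ≤ M := by
      intro x hx
      rw [norm_sub_rev]
      exact hbound x hx
    have key : ∀ (A B : Submodule ℝ H), ∀ (_ : CompleteSpace A) (_ : CompleteSpace B),
        (∀ x : H, ‖x‖ = 1 →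
          ‖(Submodule.orthogonalProjectionOnto A x : H) - (Submodule.orthogonalProjectionOnto B x : H)‖ ≤ M) →
        ∀ v ∈ (A : Set H) ∩ closedBall 0 1,
          ∃ w ∈ (B : Set H) ∩ closedBall 0 1, dist v w ≤ M := by
      intro A B _ _ hbd v hv
      obtain ⟨hvA, hv1⟩ := hv
      rw [mem_closedBall, dist_zero_right] at hv1
      refine ⟨(Submodule.orthogonalProjectionOnto B v : H), ⟨(Submodule.orthogonalProjectionOnto B v).2, ?_⟩, ?_⟩
      · rw [mem_closedBall, dist_zero_right]
        calc ‖(Submodule.orthogonalProjectionOnto B v : H)‖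
            ≤ ‖Submodule.orthogonalProjectionOnto B‖ * ‖v‖ := (Submodule.orthogonalProjectionOnto B).le_opNorm v
          _ ≤ 1 * 1 := by
              apply mul_le_mul (Submodule.orthogonalProjectionOnto_norm_le (K := B)) hv1 (norm_nonneg _) zero_le_one
          _ = 1 := one_mul 1
      · rw [dist_eq_norm]
        have hAv : (Submodule.orthogonalProjectionOnto A v : H) = v :=
          Submodule.starProjection_eq_self_iff.mpr hvA
        rcases eq_or_ne v 0 with rfl | h0
        · simp [hM]
        · have hnv : 0 < ‖v‖ := norm_pos_iff.mpr h0
          set u := ‖v‖⁻¹ • v with hu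
          have hu1 : ‖u‖ = 1 := by
            rw [hu, norm_smul, norm_inv, norm_norm, inv_mul_cancel₀ hnv.ne']
          have huA : (Submodule.orthogonalProjectionOnto A u : H) = u :=
            Submodule.starProjection_eq_self_iff.mpr (A.smul_mem _ hvA)
          have hvu : v = ‖v‖ • u := by
            rw [hu, smul_smul, mul_inv_cancel₀ hnv.ne', one_smul]
          have hscale : ‖v - (Submodule.orthogonalProjectionOnto B v : H)‖
              = ‖v‖ * ‖u - (Submodule.orthogonalProjectionOnto B u : H)‖ := by
            calc ‖v - (Submodule.orthogonalProjectionOnto B v : H)‖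
                = ‖(‖v‖ • u) - (Submodule.orthogonalProjectionOnto B (‖v‖ • u) : H)‖ := by rw [← hvu]
              _ = ‖v‖ * ‖u - (Submodule.orthogonalProjectionOnto B u : H)‖ := by
                  rw [map_smul]
                  push_cast
                  rw [← smul_sub, norm_smul, norm_norm]
          have hMu : ‖u - (Submodule.orthogonalProjectionOnto B u : H)‖ ≤ M := by
            have := hbd u hu1
            rwa [huA] at this
          calc ‖v - (Submodule.orthogonalProjectionOnto B v : H)‖
              = ‖v‖ * ‖u - (Submodule.orthogonalProjectionOnto B u : H)‖ := hscale
            _ ≤ 1 * M := mul_le_mul hv1 hMu (norm_nonneg _) zero_le_one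
            _ = M := one_mul M
    exact hausdorffDist_le_of_mem_dist hM
      (key V W ‹_› ‹_› hbound) (key W V ‹_› ‹_› hbound')
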